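/- arXiv:2412.00212 — 2 statements merged into one kernel-verified Lean document; each statement's English description precedes it below -/
import Mathlib

section
/- The maximum construction cost of the wheel W_n is ν*(W_n) = (13n² + n)/2 for all n ≥ 4. -/
namespace ConsCost

variable {V : Type*} [Fintype V]

/-- The number of elements (vertices plus edges) of a graph. -/
noncomputable def numElts (G : SimpleGraph V) : ℕ :=
  Fintype.card V + Nat.card G.edgeSet

/-- `x` is a construction sequence for `G`: a bijective listing of the vertices and
edges of `G` in which every edge appears after both of its endpoints. -/
def IsCSeq (G : SimpleGraph V) (x : Fin (numElts G) ≃ V ⊕ G.edgeSet) : Prop :=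
  ∀ (e : G.edgeSet), ∀ v ∈ (e : Sym2 V), x.symm (Sum.inl v) < x.symm (Sum.inr e)

/-- The cost `ν(e,x) = (x⁻¹e − x⁻¹u) + (x⁻¹e − x⁻¹w)` of an edge `e = uw`
in the construction sequence `x`. -/
noncomputable def edgeCost (G : SimpleGraph V) (x : Fin (numElts G) ≃ V ⊕ G.edgeSet)
    (e : G.edgeSet) : ℕ :=
  2 * (x.symm (Sum.inr e) : ℕ) -
    Sym2.lift ⟨fun u w => ((x.symm (Sum.inl u) : ℕ) + (x.symm (Sum.inl w) : ℕ)),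
      fun u w => by dsimp only; omega⟩ (e : Sym2 V)

/-- The cost `ν(x)` of a construction sequence: the sum of the costs of all edges. -/
noncomputable def cost (G : SimpleGraph V) (x : Fin (numElts G) ≃ V ⊕ G.edgeSet) : ℕ :=
  ∑ᶠ e : G.edgeSet, edgeCost G x e

/-- The maximum construction cost `ν*(G)`. -/
noncomputable def maxCost (G : SimpleGraph V) : ℕ :=
  sSup {c | ∃ x, IsCSeq G x ∧ cost G x = c}

/-- The minimum construction cost `ν_*(G)`. -/
noncomputable def minCost (G : SimpleGraph V) : ℕ :=
  sInf {c | ∃ x, IsCSeq G x ∧ cost G x = c}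
/-- The wheel `W_n = C_n * K_1`: an `n`-cycle together with a hub vertex joined to
every cycle vertex. -/
def wheelGraph (n : ℕ) : SimpleGraph (Fin n ⊕ Unit) :=
  SimpleGraph.fromRel (fun a b =>
    (∃ i j : Fin n, a = Sum.inl i ∧ b = Sum.inl j ∧ (SimpleGraph.cycleGraph n).Adj i j) ∨
      a = Sum.inr ())


open SimpleGraph

variable {n : ℕ}

lemma wheel_adj_inl_inl {i j : Fin n} :
    (wheelGraph n).Adj (Sum.inl i) (Sum.inl j) ↔ (SimpleGraph.cycleGraph n).Adj i j := by
  constructor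
  · rintro ⟨hne, (⟨i', j', hi, hj, h⟩ | h) | (⟨i', j', hi, hj, h⟩ | h)⟩
    · cases hi; cases hj; exact h
    · simp at h
    · cases hi; cases hj; exact h.symm
    · simp at h
  · intro h
    exact ⟨by simp [h.ne], Or.inl (Or.inl ⟨i, j, rfl, rfl, h⟩)⟩

lemma wheel_adj_inr_inl {i : Fin n} :
    (wheelGraph n).Adj (Sum.inr ()) (Sum.inl i) :=
  ⟨by simp, Or.inl (Or.inr rfl)⟩

variable [NeZero n]

lemma fin_val_one (hn : 2 ≤ n) : ((1 : Fin n) : ℕ) = 1 := by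
  rw [Fin.val_one' n]; exact Nat.mod_eq_of_lt (by omega)

lemma cycle_adj_succ (hn : 2 ≤ n) (i : Fin n) :
    (SimpleGraph.cycleGraph n).Adj i (i + 1) := by
  rw [SimpleGraph.cycleGraph_adj']
  right
  rw [add_sub_cancel_left]
  exact fin_val_one hn

/-- the explicit enumeration of wheel edges -/
def wf (hn : 2 ≤ n) (j : Fin n ⊕ Fin n) : (wheelGraph n).edgeSet :=
  match j with
  | Sum.inl i => ⟨s(Sum.inl i, Sum.inl (i + 1)), wheel_adj_inl_inl.mpr (cycle_adj_succ hn i)⟩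
  | Sum.inr i => ⟨s(Sum.inr (), Sum.inl i), wheel_adj_inr_inl⟩

lemma wf_bijective (hn : 4 ≤ n) : Function.Bijective (wf (n := n) (by omega)) := by
  have h1 : ((1 : Fin n) : ℕ) = 1 := fin_val_one (by omega)
  constructor
  · rintro (i | i) (j | j) h <;>
      simp only [wf, Subtype.mk.injEq, Subtype.ext_iff, Sym2.eq, Sym2.rel_iff', Prod.mk.injEq, Prod.swap_prod_mk,
        Sum.inl.injEq, Sum.inr.injEq, reduceCtorEq, and_true, true_and, false_and, and_false,
        or_false, false_or] at h
    · rcases h with ⟨h1, h2⟩ | ⟨hij, h2⟩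
      · exact congrArg Sum.inl h1
      · subst hij
        have h3 : (1 + 1 : Fin n) = 0 := by
          have : j + (1 + 1) = j + 0 := by rw [add_zero, ← add_assoc]; exact h2
          exact add_left_cancel this
        have hv : (((1:Fin n) : ℕ) + ((1:Fin n) : ℕ)) % n = 0 := by
          rw [← Fin.val_add, h3, Fin.val_zero]
        rw [h1, Nat.mod_eq_of_lt (by omega)] at hv
        exact absurd hv (by omega)
    · exact congrArg Sum.inr h
  · rintro ⟨e, he⟩
    revert he
    refine Sym2.ind (fun a b => ?_) e
    intro he
    match a, b with
    | Sum.inl i, Sum.inl j =>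
      have h := wheel_adj_inl_inl.mp he
      rw [SimpleGraph.cycleGraph_adj'] at h
      rcases h with h | h
      · refine ⟨Sum.inl j, ?_⟩
        have hij : i = j + 1 := by
          have : i - j = 1 := Fin.ext (h.trans h1.symm)
          rw [sub_eq_iff_eq_add] at this
          rw [this, add_comm]
        apply Subtype.ext
        show s(Sum.inl j, Sum.inl (j + 1)) = s(Sum.inl i, Sum.inl j)
        rw [hij, Sym2.eq_swap]
      · refine ⟨Sum.inl i, ?_⟩
        have hij : j = i + 1 := by
          have : j - i = 1 := Fin.ext (h.trans h1.symm)
          rw [sub_eq_iff_eq_add] at this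
          rw [this, add_comm]
        apply Subtype.ext
        show s(Sum.inl i, Sum.inl (i + 1)) = s(Sum.inl i, Sum.inl j)
        rw [hij]
    | Sum.inl i, Sum.inr () =>
      refine ⟨Sum.inr i, ?_⟩
      apply Subtype.ext
      show s(Sum.inr (), Sum.inl i) = s(Sum.inl i, Sum.inr ())
      rw [Sym2.eq_swap]
    | Sum.inr (), Sum.inl i => exact ⟨Sum.inr i, rfl⟩
    | Sum.inr (), Sum.inr () => exact absurd rfl (((wheelGraph n).mem_edgeSet).mp he).ne

/-- enumeration of wheel edges as an equiv -/
noncomputable def wEquiv (hn : 4 ≤ n) : (Fin n ⊕ Fin n) ≃ (wheelGraph n).edgeSet :=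
  Equiv.ofBijective _ (wf_bijective hn)

/-- endpoints of the edges -/
def ends (j : Fin n ⊕ Fin n) : (Fin n ⊕ Unit) × (Fin n ⊕ Unit) :=
  match j with
  | Sum.inl i => (Sum.inl i, Sum.inl (i + 1))
  | Sum.inr i => (Sum.inr (), Sum.inl i)

lemma wEquiv_coe (hn : 4 ≤ n) (j : Fin n ⊕ Fin n) :
    ((wEquiv hn j : Sym2 (Fin n ⊕ Unit))) = s((ends j).1, (ends j).2) := by
  cases j <;> rfl

lemma card_edgeSet (hn : 4 ≤ n) : Nat.card (wheelGraph n).edgeSet = 2 * n := by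
  rw [Nat.card_congr (wEquiv hn).symm]
  simp [Nat.card_eq_fintype_card]
  omega

lemma numElts_wheel (hn : 4 ≤ n) : numElts (wheelGraph n) = 3 * n + 1 := by
  rw [numElts, card_edgeSet hn]
  simp
  omega

lemma cost_eq_sum (hn : 4 ≤ n)
    (x : Fin (numElts (wheelGraph n)) ≃ (Fin n ⊕ Unit) ⊕ (wheelGraph n).edgeSet) :
    cost (wheelGraph n) x =
      ∑ j : Fin n ⊕ Fin n,
        (2 * (x.symm (Sum.inr (wEquiv hn j)) : ℕ) -
          ((x.symm (Sum.inl (ends j).1) : ℕ) + (x.symm (Sum.inl (ends j).2) : ℕ))) := by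
  classical
  have : Fintype (wheelGraph n).edgeSet := Fintype.ofFinite _
  rw [cost, finsum_eq_sum_of_fintype]
  rw [← Equiv.sum_comp (wEquiv hn) (edgeCost (wheelGraph n) x)]
  refine Finset.sum_congr rfl fun j _ => ?_
  rw [edgeCost, wEquiv_coe hn j, Sym2.lift_mk]

/-- order vertices: hub first, then cycle vertices -/
def vE : (Fin n ⊕ Unit) ≃ Fin (n + 1) where
  toFun := Sum.elim (fun i => i.succ) (fun _ => 0)
  invFun := fun k => Fin.cases (Sum.inr ()) (fun i => Sum.inl i) k
  left_inv := by rintro (i | ⟨⟩) <;> simp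
  right_inv := by
    intro k
    induction k using Fin.cases <;> simp

noncomputable def eE (hn : 4 ≤ n) : (wheelGraph n).edgeSet ≃ Fin (2 * n) :=
  ((wEquiv hn).symm.trans finSumFinEquiv).trans (finCongr (by omega))

noncomputable def xW (hn : 4 ≤ n) :
    Fin (numElts (wheelGraph n)) ≃ (Fin n ⊕ Unit) ⊕ (wheelGraph n).edgeSet :=
  (finCongr (numElts_wheel hn)).trans
    (((Equiv.sumCongr vE (eE hn)).trans
      (finSumFinEquiv.trans (finCongr (by omega : (n + 1) + 2 * n = 3 * n + 1)))).symm)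

lemma xW_symm_inl (hn : 4 ≤ n) (v : Fin n ⊕ Unit) :
    (((xW hn).symm (Sum.inl v)) : ℕ) = ((vE v) : ℕ) := by
  simp [xW]

lemma xW_symm_inr (hn : 4 ≤ n) (e : (wheelGraph n).edgeSet) :
    (((xW hn).symm (Sum.inr e)) : ℕ) = (n + 1) + ((eE hn e) : ℕ) := by
  simp [xW]

lemma isCSeq_xW (hn : 4 ≤ n) : IsCSeq (wheelGraph n) (xW hn) := by
  intro e v _
  rw [Fin.lt_def, xW_symm_inl hn, xW_symm_inr hn]
  have : ((vE v) : ℕ) < n + 1 := (vE v).isLt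
  omega

lemma eE_cyc (hn : 4 ≤ n) (i : Fin n) : ((eE hn (wEquiv hn (Sum.inl i))) : ℕ) = i := by
  simp [eE]

lemma eE_spoke (hn : 4 ≤ n) (i : Fin n) : ((eE hn (wEquiv hn (Sum.inr i))) : ℕ) = n + i := by
  simp [eE]
  omega

lemma cost_xW (hn : 4 ≤ n) : 2 * cost (wheelGraph n) (xW hn) = 13 * n ^ 2 + n := by
  rw [cost_eq_sum hn, Fintype.sum_sum_type]
  have hcyc : ∀ i : Fin n,
      (2 * (((xW hn).symm (Sum.inr (wEquiv hn (Sum.inl i)))) : ℕ) -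
        ((((xW hn).symm (Sum.inl (ends (Sum.inl i)).1)) : ℕ) +
          (((xW hn).symm (Sum.inl (ends (Sum.inl i)).2)) : ℕ))) =
      (i : ℕ) + (2 * n - ((i + 1 : Fin n) : ℕ)) := by
    intro i
    rw [xW_symm_inr hn, eE_cyc hn]
    show 2 * (n + 1 + (i : ℕ)) -
      ((((xW hn).symm (Sum.inl (Sum.inl i))) : ℕ) +
        (((xW hn).symm (Sum.inl (Sum.inl (i + 1)))) : ℕ)) = _
    rw [xW_symm_inl hn, xW_symm_inl hn]
    show 2 * (n + 1 + (i : ℕ)) - (((i : ℕ) + 1) + (((i + 1 : Fin n) : ℕ) + 1)) = _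
    have := (i + 1 : Fin n).isLt
    omega
  have hspoke : ∀ i : Fin n,
      (2 * (((xW hn).symm (Sum.inr (wEquiv hn (Sum.inr i)))) : ℕ) -
        ((((xW hn).symm (Sum.inl (ends (Sum.inr i)).1)) : ℕ) +
          (((xW hn).symm (Sum.inl (ends (Sum.inr i)).2)) : ℕ))) =
      4 * n + 1 + (i : ℕ) := by
    intro i
    rw [xW_symm_inr hn, eE_spoke hn]
    show 2 * (n + 1 + (n + (i : ℕ))) -
      ((((xW hn).symm (Sum.inl (Sum.inr ()))) : ℕ) +
        (((xW hn).symm (Sum.inl (Sum.inl i))) : ℕ)) = _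
    rw [xW_symm_inl hn, xW_symm_inl hn]
    show 2 * (n + 1 + (n + (i : ℕ))) - (0 + ((i : ℕ) + 1)) = _
    omega
  rw [Finset.sum_congr rfl fun i _ => hcyc i, Finset.sum_congr rfl fun i _ => hspoke i]
  rw [Finset.sum_add_distrib]
  have hre : ∑ i : Fin n, (2 * n - ((i + 1 : Fin n) : ℕ)) = ∑ i : Fin n, (2 * n - (i : ℕ)) :=
    Fintype.sum_equiv (Equiv.addRight (1 : Fin n)) _ _ (fun i => rfl)
  rw [hre, ← Finset.sum_add_distrib]
  have hconst : ∑ i : Fin n, ((i : ℕ) + (2 * n - (i : ℕ))) = 2 * n * n := by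
    rw [Finset.sum_congr rfl fun (i : Fin n) _ => (by have := i.isLt; omega :
      (i : ℕ) + (2 * n - (i : ℕ)) = 2 * n)]
    simp [Finset.card_univ, mul_comm]
  have hsp : ∑ i : Fin n, (4 * n + 1 + (i : ℕ)) = n * (4 * n + 1) + ∑ i : Fin n, (i : ℕ) := by
    rw [Finset.sum_add_distrib]
    simp [Finset.card_univ, mul_comm, add_comm]
  have hgauss : (∑ i : Fin n, (i : ℕ)) * 2 = n * (n - 1) := by
    rw [Fin.sum_univ_eq_sum_range (fun i => i) n]
    exact Finset.sum_range_id_mul_two n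
  rw [hconst, hsp]
  obtain ⟨m, rfl⟩ : ∃ m, n = m + 4 := ⟨n - 4, by omega⟩
  have h4 : m + 4 - 1 = m + 3 := by omega
  rw [h4] at hgauss
  ring_nf
  ring_nf at hgauss
  omega

lemma cost_upper (hn : 4 ≤ n)
    (x : Fin (numElts (wheelGraph n)) ≃ (Fin n ⊕ Unit) ⊕ (wheelGraph n).edgeSet)
    (hx : IsCSeq (wheelGraph n) x) :
    2 * cost (wheelGraph n) x ≤ 13 * n ^ 2 + n := by
  classical
  set p : (Fin n ⊕ Unit) → ℕ := fun v => (x.symm (Sum.inl v) : ℕ) with hp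
  set P : (Fin n ⊕ Fin n) → ℕ := fun j => (x.symm (Sum.inr (wEquiv hn j)) : ℕ) with hP
  have hpinj : Function.Injective p := by
    intro a b h
    have := x.symm.injective (Fin.val_injective h)
    exact Sum.inl.inj this
  have hPinj : Function.Injective P := by
    intro a b h
    have := x.symm.injective (Fin.val_injective h)
    exact (wEquiv hn).injective (Sum.inr.inj this)
  have hNlt : ∀ j, P j < 3 * n + 1 := by
    intro j
    have h1 := (x.symm (Sum.inr (wEquiv hn j))).isLt
    have h2 := numElts_wheel (n := n) hn
    show (x.symm (Sum.inr (wEquiv hn j)) : ℕ) < 3 * n + 1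
    omega
  have hlt1 : ∀ j, p (ends j).1 < P j := by
    intro j
    have hm : (ends j).1 ∈ ((wEquiv hn j : Sym2 (Fin n ⊕ Unit))) := by
      rw [wEquiv_coe hn]; exact Sym2.mem_mk_left _ _
    exact Fin.lt_def.mp (hx (wEquiv hn j) _ hm)
  have hlt2 : ∀ j, p (ends j).2 < P j := by
    intro j
    have hm : (ends j).2 ∈ ((wEquiv hn j : Sym2 (Fin n ⊕ Unit))) := by
      rw [wEquiv_coe hn]; exact Sym2.mem_mk_right _ _
    exact Fin.lt_def.mp (hx (wEquiv hn j) _ hm)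
  set χ : (Fin n ⊕ Unit) → ℕ → ℕ → ℕ := fun v t Q => if p v ≤ t ∧ t < Q then 1 else 0 with hχ
  set F : ℕ → ℕ := fun t =>
    ∑ j : Fin n ⊕ Fin n, (χ (ends j).1 t (P j) + χ (ends j).2 t (P j)) with hF
  have hsum_int : ∀ (v : Fin n ⊕ Unit) (Q : ℕ), p v < Q → Q ≤ 3 * n + 1 →
      ∑ t ∈ Finset.range (3 * n + 1), χ v t Q = Q - p v := by
    intro v Q h1 h2
    rw [hχ]
    rw [← Finset.card_filter]
    have : (Finset.range (3 * n + 1)).filter (fun t => p v ≤ t ∧ t < Q) =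
        Finset.Ico (p v) Q := by
      ext t
      simp only [Finset.mem_filter, Finset.mem_range, Finset.mem_Ico]
      omega
    rw [this, Nat.card_Ico]
  have hcost : cost (wheelGraph n) x = ∑ t ∈ Finset.range (3 * n + 1), F t := by
    rw [cost_eq_sum hn x]
    have perj : ∀ j : Fin n ⊕ Fin n,
        2 * P j - (p (ends j).1 + p (ends j).2) =
          ∑ t ∈ Finset.range (3 * n + 1), (χ (ends j).1 t (P j) + χ (ends j).2 t (P j)) := by
      intro j
      rw [Finset.sum_add_distrib,
        hsum_int _ _ (hlt1 j) (by have := hNlt j; omega),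
        hsum_int _ _ (hlt2 j) (by have := hNlt j; omega)]
      have := hlt1 j
      have := hlt2 j
      omega
    calc (∑ j : Fin n ⊕ Fin n, (2 * P j - (p (ends j).1 + p (ends j).2)))
        = ∑ j : Fin n ⊕ Fin n,
            ∑ t ∈ Finset.range (3 * n + 1), (χ (ends j).1 t (P j) + χ (ends j).2 t (P j)) :=
          Finset.sum_congr rfl fun j _ => perj j
      _ = ∑ t ∈ Finset.range (3 * n + 1), F t := Finset.sum_comm
  have B1 : ∀ t, F t ≤ 2 * (3 * n - t) := by
    intro t
    have step1 : F t ≤ ∑ j : Fin n ⊕ Fin n, 2 * (if t < P j then 1 else 0) := by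
      rw [hF]
      refine Finset.sum_le_sum fun j _ => ?_
      simp only [hχ]
      split_ifs <;> omega
    have step2 : ∑ j : Fin n ⊕ Fin n, 2 * (if t < P j then 1 else 0) =
        2 * ((Finset.univ.filter (fun j : Fin n ⊕ Fin n => t < P j)).card) := by
      rw [← Finset.mul_sum, Finset.card_filter]
    have step3 : (Finset.univ.filter (fun j : Fin n ⊕ Fin n => t < P j)).card ≤
        (Finset.Ioc t (3 * n)).card := by
      apply Finset.card_le_card_of_injOn P
      · intro j hj
        simp only [Finset.mem_coe, Finset.mem_filter] at hj
        simp only [Finset.mem_coe, Finset.mem_Ioc]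
        exact ⟨hj.2, by have := hNlt j; omega⟩
      · exact fun a _ b _ h => hPinj h
    rw [Nat.card_Ioc] at step3
    omega
  have B2 : ∀ t, F t ≤ n + 3 * t := by
    intro t
    set χ' : (Fin n ⊕ Unit) → ℕ := fun v => if p v ≤ t then 1 else 0 with hχ'
    have step1 : F t ≤ ∑ j : Fin n ⊕ Fin n, (χ' (ends j).1 + χ' (ends j).2) := by
      rw [hF]
      refine Finset.sum_le_sum fun j _ => ?_
      simp only [hχ, hχ']
      split_ifs <;> omega
    have hre : ∑ i : Fin n, χ' (Sum.inl (i + 1)) = ∑ i : Fin n, χ' (Sum.inl i) :=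
      Fintype.sum_equiv (Equiv.addRight (1 : Fin n)) _ _ fun i => rfl
    have hsplit : ∑ j : Fin n ⊕ Fin n, (χ' (ends j).1 + χ' (ends j).2)
        = 3 * (∑ i : Fin n, χ' (Sum.inl i)) + n * χ' (Sum.inr ()) := by
      rw [Fintype.sum_sum_type]
      simp only [ends]
      rw [Finset.sum_add_distrib, Finset.sum_add_distrib, hre, Finset.sum_const,
        Finset.card_univ, Fintype.card_fin, smul_eq_mul]
      ring
    set K := ∑ i : Fin n, χ' (Sum.inl i) with hKdef
    have hKcard : K = (Finset.univ.filter (fun i : Fin n => p (Sum.inl i) ≤ t)).card := by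
      rw [hKdef, Finset.card_filter]
    by_cases hhub : p (Sum.inr ()) ≤ t
    · have hKle : K ≤ t := by
        rw [hKcard]
        have hle : (Finset.univ.filter (fun i : Fin n => p (Sum.inl i) ≤ t)).card ≤
            ((Finset.Iic t).erase (p (Sum.inr ()))).card := by
          apply Finset.card_le_card_of_injOn (fun i => p (Sum.inl i))
          · intro i hi
            simp only [Finset.mem_coe, Finset.mem_filter] at hi
            simp only [Finset.mem_coe, Finset.mem_erase, Finset.mem_Iic]
            refine ⟨fun h => ?_, hi.2⟩
            exact absurd (hpinj h) (by simp)
          · exact fun a _ b _ h => Sum.inl.inj (hpinj h)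
        rw [Finset.card_erase_of_mem (by simpa [Finset.mem_Iic] using hhub),
          Nat.card_Iic] at hle
        omega
      have hhub1 : χ' (Sum.inr ()) = 1 := by simp [hχ', hhub]
      rw [hsplit, hhub1] at step1
      omega
    · have hhub0 : χ' (Sum.inr ()) = 0 := by simp [hχ', hhub]
      have hKle : K ≤ t + 1 := by
        rw [hKcard]
        have hle : (Finset.univ.filter (fun i : Fin n => p (Sum.inl i) ≤ t)).card ≤
            (Finset.Iic t).card := by
          apply Finset.card_le_card_of_injOn (fun i => p (Sum.inl i))
          · intro i hi
            simp only [Finset.mem_coe, Finset.mem_filter] at hi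
            simpa [Finset.mem_Iic] using hi.2
          · exact fun a _ b _ h => Sum.inl.inj (hpinj h)
        rwa [Nat.card_Iic] at hle
      rw [hsplit, hhub0] at step1
      omega
  -- final assembly
  have hS1 : ∑ t ∈ Finset.Ico 0 (n + 1), 2 * (n + 3 * t) =
      (n + 1) * (2 * n) + 3 * ((n + 1) * n) := by
    rw [← Finset.range_eq_Ico]
    have : ∀ t ∈ Finset.range (n + 1), 2 * (n + 3 * t) = 2 * n + 6 * t := fun t _ => by ring
    rw [Finset.sum_congr rfl this, Finset.sum_add_distrib, Finset.sum_const, Finset.card_range,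
      smul_eq_mul, ← Finset.mul_sum]
    have hg : (∑ t ∈ Finset.range (n + 1), t) * 2 = (n + 1) * n :=
      Finset.sum_range_id_mul_two (n + 1)
    omega
  have hS2 : ∑ t ∈ Finset.Ico (n + 1) (3 * n + 1), 2 * (2 * (3 * n - t)) =
      2 * (2 * n * (2 * n - 1)) := by
    rw [Finset.sum_Ico_eq_sum_range]
    rw [show 3 * n + 1 - (n + 1) = 2 * n by omega]
    have h1 : ∀ s ∈ Finset.range (2 * n), 2 * (2 * (3 * n - (n + 1 + s))) =
        (fun s => 4 * s) (2 * n - 1 - s) := by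
      intro s hs
      simp only [Finset.mem_range] at hs
      simp only
      omega
    rw [Finset.sum_congr rfl h1, Finset.sum_range_reflect (fun s => 4 * s) (2 * n)]
    have hg : (∑ s ∈ Finset.range (2 * n), s) * 2 = 2 * n * (2 * n - 1) :=
      Finset.sum_range_id_mul_two (2 * n)
    calc ∑ s ∈ Finset.range (2 * n), 4 * s = 4 * ∑ s ∈ Finset.range (2 * n), s := by
          rw [Finset.mul_sum]
      _ = 2 * (2 * n * (2 * n - 1)) := by omega
  calc 2 * cost (wheelGraph n) x = ∑ t ∈ Finset.range (3 * n + 1), 2 * F t := by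
        rw [hcost, Finset.mul_sum]
    _ = ∑ t ∈ Finset.Ico 0 (n + 1), 2 * F t + ∑ t ∈ Finset.Ico (n + 1) (3 * n + 1), 2 * F t := by
        rw [Finset.range_eq_Ico, ← Finset.sum_Ico_consecutive _ (by omega : 0 ≤ n + 1)
          (by omega : n + 1 ≤ 3 * n + 1)]
    _ ≤ ∑ t ∈ Finset.Ico 0 (n + 1), 2 * (n + 3 * t) +
          ∑ t ∈ Finset.Ico (n + 1) (3 * n + 1), 2 * (2 * (3 * n - t)) := by
        refine Nat.add_le_add (Finset.sum_le_sum fun t _ => ?_)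
          (Finset.sum_le_sum fun t _ => ?_)
        · exact Nat.mul_le_mul_left 2 (B2 t)
        · exact Nat.mul_le_mul_left 2 (B1 t)
    _ ≤ 13 * n ^ 2 + n := by
        rw [hS1, hS2]
        obtain ⟨m, rfl⟩ : ∃ m, n = m + 4 := ⟨n - 4, by omega⟩
        have h4 : 2 * (m + 4) - 1 = 2 * m + 7 := by omega
        rw [h4]
        ring_nf
        omega


/-- `ν*(W_n) = (13n² + n)/2` for `n ≥ 4`. -/
theorem maxCost_wheel (n : ℕ) (hn : 4 ≤ n) :
    2 * maxCost (wheelGraph n) = 13 * n ^ 2 + n := by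
  haveI : NeZero n := ⟨by omega⟩
  have hmem : cost (wheelGraph n) (xW hn) ∈
      {c | ∃ x, IsCSeq (wheelGraph n) x ∧ cost (wheelGraph n) x = c} :=
    ⟨xW hn, isCSeq_xW hn, rfl⟩
  have hub : ∀ c ∈ {c | ∃ x, IsCSeq (wheelGraph n) x ∧ cost (wheelGraph n) x = c},
      c ≤ cost (wheelGraph n) (xW hn) := by
    rintro c ⟨x, hx, rfl⟩
    have h1 := cost_upper hn x hx
    have h2 := cost_xW hn
    omega
  have hsup : sSup {c | ∃ x, IsCSeq (wheelGraph n) x ∧ cost (wheelGraph n) x = c} =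
      cost (wheelGraph n) (xW hn) :=
    le_antisymm (csSup_le ⟨_, hmem⟩ hub) (le_csSup ⟨_, hub⟩ hmem)
  rw [maxCost, hsup]
  exact cost_xW hn

end ConsCost
end

section
/- The minimum construction cost of the cycle C_n is ν_*(C_n) = 6n − 4 for all n ≥ 3. -/
namespace ConsCost

variable {V : Type*} [Fintype V]

open SimpleGraph

variable (m : ℕ)

def eAdj (i : Fin (m+3)) : (cycleGraph (m+3)).Adj i (i+1) := by
  rw [cycleGraph_adj]
  right
  simp

def eFun (i : Fin (m+3)) : (cycleGraph (m+3)).edgeSet :=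
  ⟨s(i, i+1), eAdj m i⟩

open Fin.CommRing in
lemma eFun_bij : Function.Bijective (eFun m) := by
  constructor
  · intro i j h
    have h2 : s(i, i+1) = s(j, j+1) := congrArg Subtype.val h
    rw [Sym2.eq_iff] at h2
    rcases h2 with ⟨h1, _⟩ | ⟨h1, h2⟩
    · exact h1
    · exfalso
      have h3 : j + 2 = j := by
        rw [show j + 2 = j + 1 + 1 by ring, ← h1, h2]
      have h4 : (2 : Fin (m+3)) = 0 := add_eq_left.mp h3
      have h5 : (2 : Fin (m+3)).val = 2 % (m+3) := rfl
      have h6 : 2 % (m+3) = 2 := Nat.mod_eq_of_lt (by omega)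
      rw [h4, h6] at h5
      exact absurd h5.symm (by norm_num)
  · rintro ⟨e, he⟩
    induction e with
    | _ u v =>
      rw [SimpleGraph.mem_edgeSet, cycleGraph_adj] at he
      rcases he with h | h
      · refine ⟨v, ?_⟩
        have hu : u = 1 + v := sub_eq_iff_eq_add.mp h
        apply Subtype.ext
        show s(v, v+1) = s(u, v)
        rw [hu, Sym2.eq_iff]
        exact Or.inr ⟨rfl, add_comm v 1⟩
      · refine ⟨u, ?_⟩
        have hv : v = 1 + u := sub_eq_iff_eq_add.mp h
        apply Subtype.ext
        show s(u, u+1) = s(u, v)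
        rw [hv, Sym2.eq_iff]
        exact Or.inl ⟨rfl, add_comm u 1⟩

noncomputable def eEquiv : Fin (m+3) ≃ (cycleGraph (m+3)).edgeSet :=
  Equiv.ofBijective _ (eFun_bij m)

lemma card_edgeSet_s15 : Nat.card (cycleGraph (m+3)).edgeSet = m + 3 := by
  rw [← Nat.card_congr (eEquiv m), Nat.card_eq_fintype_card, Fintype.card_fin]

lemma numElts_eq : numElts (cycleGraph (m+3)) = 2 * (m+3) := by
  rw [numElts, card_edgeSet_s15, Fintype.card_fin]; ring


section Seq

variable {m : ℕ} (x : Fin (numElts (cycleGraph (m+3))) ≃ (Fin (m+3)) ⊕ (cycleGraph (m+3)).edgeSet)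

/-- position of vertex `v` -/
noncomputable def pv (v : Fin (m+3)) : ℕ := (x.symm (Sum.inl v) : ℕ)

/-- position of edge `{i, i+1}` -/
noncomputable def pe (i : Fin (m+3)) : ℕ := (x.symm (Sum.inr (eFun m i)) : ℕ)

lemma mem_eFun_left (i : Fin (m+3)) : i ∈ ((eFun m i : (cycleGraph (m+3)).edgeSet) : Sym2 (Fin (m+3))) := by
  show i ∈ s(i, i+1); simp

lemma mem_eFun_right (i : Fin (m+3)) : i + 1 ∈ ((eFun m i : (cycleGraph (m+3)).edgeSet) : Sym2 (Fin (m+3))) := by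
  show i + 1 ∈ s(i, i+1); simp

lemma pv_lt_pe (hx : IsCSeq _ x) (i : Fin (m+3)) : pv x i < pe x i :=
  hx (eFun m i) i (mem_eFun_left i)

lemma pv_succ_lt_pe (hx : IsCSeq _ x) (i : Fin (m+3)) : pv x (i+1) < pe x i :=
  hx (eFun m i) (i+1) (mem_eFun_right i)

lemma cost_eq : cost _ x = ∑ i : Fin (m+3), (2 * pe x i - (pv x i + pv x (i+1))) := by
  rw [cost, finsum_eq_sum_of_fintype]
  rw [← Fintype.sum_bijective (eFun m) (eFun_bij m) _ _ (fun i => rfl)]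
  refine Finset.sum_congr rfl fun i _ => ?_
  rw [edgeCost]
  rfl

lemma sum_pos_total : ∑ v : Fin (m+3), pv x v + ∑ i : Fin (m+3), pe x i
    = (m+3) * (2*(m+3) - 1) := by
  have h1 : ∑ z : (Fin (m+3)) ⊕ (cycleGraph (m+3)).edgeSet, ((x.symm z : Fin (numElts (cycleGraph (m+3)))) : ℕ)
      = ∑ k : Fin (numElts (cycleGraph (m+3))), (k : ℕ) := Equiv.sum_comp x.symm _
  rw [Fintype.sum_sum_type] at h1
  have h2 : ∑ e : (cycleGraph (m+3)).edgeSet, ((x.symm (Sum.inr e) : Fin (numElts (cycleGraph (m+3)))) : ℕ)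
      = ∑ i : Fin (m+3), pe x i :=
    (Fintype.sum_bijective (eFun m) (eFun_bij m) _ _ (fun i => rfl)).symm
  have h3 : ∑ k : Fin (numElts (cycleGraph (m+3))), (k : ℕ) = (m+3) * (2*(m+3) - 1) := by
    rw [Fin.sum_univ_eq_sum_range (fun k => k), numElts_eq]
    have h4 := Finset.sum_range_id_mul_two (2*(m+3))
    have h5 : 2*(m+3) - 1 = 2*m+5 := by omega
    rw [h5] at h4 ⊢
    zify at h4 ⊢
    linarith
  rw [h2, h3] at h1
  exact h1

lemma card_filter_fin (N k : ℕ) (hk : k < N) :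
    (Finset.univ.filter (fun j : Fin N => (j : ℕ) ≤ k)).card = k + 1 := by
  rw [Finset.card_filter, Fin.sum_univ_eq_sum_range (fun j => if j ≤ k then 1 else 0),
    ← Finset.card_filter]
  rw [show (Finset.range N).filter (fun j => j ≤ k) = Finset.range (k+1) by
    ext a; simp only [Finset.mem_filter, Finset.mem_range]; omega]
  exact Finset.card_range _

lemma count_split (k : ℕ) :
    (Finset.univ.filter (fun v : Fin (m+3) => pv x v ≤ k)).card
      + (Finset.univ.filter (fun i : Fin (m+3) => pe x i ≤ k)).card
    = (Finset.univ.filter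
        (fun j : Fin (numElts (cycleGraph (m+3))) => (j : ℕ) ≤ k)).card := by
  classical
  have h1 : (Finset.univ.filter
        (fun j : Fin (numElts (cycleGraph (m+3))) => (j : ℕ) ≤ k)).card
      = (Finset.univ.filter
        (fun z : (Fin (m+3)) ⊕ (cycleGraph (m+3)).edgeSet =>
          ((x.symm z : Fin (numElts (cycleGraph (m+3)))) : ℕ) ≤ k)).card := by
    apply Finset.card_equiv x
    intro j
    simp
  have h2 : (Finset.univ.filter
        (fun e : (cycleGraph (m+3)).edgeSet =>
          ((x.symm (Sum.inr e) : Fin (numElts (cycleGraph (m+3)))) : ℕ) ≤ k)).card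
      = (Finset.univ.filter (fun i : Fin (m+3) => pe x i ≤ k)).card := by
    apply Finset.card_equiv (eEquiv m).symm
    intro e
    simp only [Finset.mem_filter, Finset.mem_univ, true_and, pe]
    have : eFun m ((eEquiv m).symm e) = e := (eEquiv m).apply_symm_apply e
    show _ ↔ (eEquiv m).symm e ∈ Finset.univ.filter (fun i : Fin (m+3) => pe x i ≤ k)
    rw [Finset.mem_filter, pe, this]; simp
  rw [h1, ← h2]
  rw [Finset.card_filter, Finset.card_filter, Finset.card_filter, Fintype.sum_sum_type]
  rfl

open Fin.CommRing in
lemma closed_eq_univ {S : Finset (Fin (m+3))} (hne : S.Nonempty)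
    (hcl : ∀ a ∈ S, a + 1 ∈ S) : S = Finset.univ := by
  obtain ⟨a, ha⟩ := hne
  have key : ∀ j : ℕ, a + (j : Fin (m+3)) ∈ S := by
    intro j
    induction j with
    | zero => simpa using ha
    | succ j ih =>
        have h := hcl _ ih
        have h2 : ((j+1 : ℕ) : Fin (m+3)) = (j : Fin (m+3)) + 1 := by push_cast; ring
        rw [h2, ← add_assoc]
        exact h
  apply Finset.eq_univ_of_forall
  intro b
  have := key ((b - a).val)
  rwa [Fin.cast_val_eq_self, add_sub_cancel] at this

lemma mk_le (hx : IsCSeq _ x) (k : ℕ) (hk : k ≤ 2*(m+3) - 2) :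
    (Finset.univ.filter (fun i : Fin (m+3) => pe x i ≤ k)).card ≤ k / 2 := by
  classical
  set S := Finset.univ.filter (fun v : Fin (m+3) => pv x v ≤ k) with hS
  set I := Finset.univ.filter (fun i : Fin (m+3) => pe x i ≤ k) with hI
  have hsub : I ⊆ S := by
    intro i hi
    simp only [hI, Finset.mem_filter, Finset.mem_univ, true_and] at hi
    simp only [hS, Finset.mem_filter, Finset.mem_univ, true_and]
    exact le_trans (le_of_lt (pv_lt_pe x hx i)) hi
  have hsplit : S.card + I.card = k + 1 := by
    rw [count_split x k, card_filter_fin]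
    rw [numElts_eq]
    omega
  have hSle : S.card ≤ m + 3 := le_trans (Finset.card_le_card (Finset.subset_univ S))
    (by simp)
  by_cases hu : S.card = m + 3
  · omega
  · by_cases hI0 : I.card = 0
    · omega
    · have hlt : I.card < S.card := by
        rcases lt_or_eq_of_le (Finset.card_le_card hsub) with h | h
        · exact h
        · exfalso
          have hIS : I = S := Finset.eq_of_subset_of_card_le hsub (le_of_eq h.symm)
          have hSu : S = Finset.univ := by
            apply closed_eq_univ
            · exact Finset.card_pos.mp (by omega)
            · intro a haS
              have haI : a ∈ I := hIS ▸ haS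
              simp only [hI, Finset.mem_filter, Finset.mem_univ, true_and] at haI
              simp only [hS, Finset.mem_filter, Finset.mem_univ, true_and]
              exact le_trans (le_of_lt (pv_succ_lt_pe x hx a)) haI
          rw [hSu, Finset.card_univ] at hu
          simp at hu
      omega

lemma gauss_half (t : ℕ) : ∑ k ∈ Finset.range (2*t+1), k/2 = t*t := by
  induction t with
  | zero => simp
  | succ t ih =>
      rw [show 2*(t+1)+1 = (2*t+1)+1+1 by ring, Finset.sum_range_succ,
        Finset.sum_range_succ, ih]
      have h : (t+1)*(t+1) = t*t + 2*t + 1 := by ring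
      rw [h]
      omega

lemma range_filter_lt_card (N p : ℕ) (h : p ≤ N) :
    ((Finset.range N).filter (fun k => k < p)).card = p := by
  rw [show (Finset.range N).filter (fun k => k < p) = Finset.range p by
    ext a; simp only [Finset.mem_filter, Finset.mem_range]; omega]
  exact Finset.card_range p

lemma sum_pe_ge (hx : IsCSeq _ x) :
    (m+3)*(m+3) + (m+3) - 1 ≤ ∑ i : Fin (m+3), pe x i := by
  classical
  have hN := numElts_eq m
  have hpe_lt : ∀ i, pe x i < 2*(m+3) := by
    intro i
    have h := (x.symm (Sum.inr (eFun m i))).isLt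
    show ((x.symm (Sum.inr (eFun m i)) : Fin (numElts (cycleGraph (m+3)))) : ℕ) < 2*(m+3)
    omega
  have hsum : ∑ i : Fin (m+3), pe x i
      = ∑ k ∈ Finset.range (2*(m+3)),
          (Finset.univ.filter (fun i : Fin (m+3) => k < pe x i)).card := by
    have h1 : ∀ i : Fin (m+3), pe x i
        = ∑ k ∈ Finset.range (2*(m+3)), if k < pe x i then 1 else 0 := by
      intro i
      rw [← Finset.card_filter, range_filter_lt_card _ _ (le_of_lt (hpe_lt i))]
    calc ∑ i : Fin (m+3), pe x i
        = ∑ i : Fin (m+3), ∑ k ∈ Finset.range (2*(m+3)),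
            if k < pe x i then 1 else 0 := Finset.sum_congr rfl (fun i _ => h1 i)
      _ = ∑ k ∈ Finset.range (2*(m+3)), ∑ i : Fin (m+3),
            if k < pe x i then 1 else 0 := Finset.sum_comm
      _ = _ := Finset.sum_congr rfl (fun k _ => (Finset.card_filter _ _).symm)
  have hcomp : ∀ k, (Finset.univ.filter (fun i : Fin (m+3) => k < pe x i)).card
      + (Finset.univ.filter (fun i : Fin (m+3) => pe x i ≤ k)).card = m + 3 := by
    intro k
    have h := Finset.card_filter_add_card_filter_not
      (s := (Finset.univ : Finset (Fin (m+3)))) (p := fun i => k < pe x i)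
    simp only [not_lt, Finset.card_univ, Fintype.card_fin] at h
    exact h
  have hsum2 : ∑ i : Fin (m+3), pe x i
      + ∑ k ∈ Finset.range (2*(m+3)),
          (Finset.univ.filter (fun i : Fin (m+3) => pe x i ≤ k)).card
      = 2*(m+3)*(m+3) := by
    rw [hsum, ← Finset.sum_add_distrib]
    rw [Finset.sum_congr rfl (fun k _ => hcomp k)]
    rw [Finset.sum_const, Finset.card_range, smul_eq_mul]
  have hMle : ∑ k ∈ Finset.range (2*(m+3)),
      (Finset.univ.filter (fun i : Fin (m+3) => pe x i ≤ k)).card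
      ≤ (m+2)*(m+2) + (m+3) := by
    rw [show 2*(m+3) = (2*(m+2)+1)+1 by ring, Finset.sum_range_succ]
    have hb1 : ∑ k ∈ Finset.range (2*(m+2)+1),
        (Finset.univ.filter (fun i : Fin (m+3) => pe x i ≤ k)).card
        ≤ ∑ k ∈ Finset.range (2*(m+2)+1), k/2 := by
      apply Finset.sum_le_sum
      intro k hk
      simp only [Finset.mem_range] at hk
      exact mk_le x hx k (by omega)
    have hg := gauss_half (m+2)
    have hlast : (Finset.univ.filter
        (fun i : Fin (m+3) => pe x i ≤ 2*(m+2)+1)).card ≤ m+3 :=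
      le_trans (Finset.card_filter_le _ _) (by simp)
    omega
  have h1 : 1 ≤ (m+3)*(m+3)+(m+3) := by nlinarith
  zify [h1]
  zify at hsum2 hMle
  nlinarith [hsum2, hMle]

lemma cost_ge (hx : IsCSeq _ x) : 6*(m+3) - 4 ≤ cost _ x := by
  rw [cost_eq]
  have hterm : ∀ i : Fin (m+3), pv x i + pv x (i+1) ≤ 2 * pe x i := by
    intro i
    have h1 := pv_lt_pe x hx i
    have h2 := pv_succ_lt_pe x hx i
    omega
  rw [Finset.sum_tsub_distrib _ (fun i _ => hterm i)]
  rw [Finset.sum_add_distrib]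
  have hshift : ∑ i : Fin (m+3), pv x (i+1) = ∑ i : Fin (m+3), pv x i :=
    Fintype.sum_equiv (Equiv.addRight (1 : Fin (m+3))) _ _ (fun i => rfl)
  rw [hshift, ← Finset.mul_sum]
  have htot := sum_pos_total x
  have hge := sum_pe_ge x hx
  set A := ∑ i : Fin (m+3), pe x i with hA
  set B := ∑ v : Fin (m+3), pv x v with hB
  have hBA : B + B ≤ 2 * A := by
    have : ∀ i : Fin (m+3), pv x i ≤ pe x i := fun i => le_of_lt (pv_lt_pe x hx i)
    have h := Finset.sum_le_sum (fun i (_ : i ∈ Finset.univ) => this i)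
    rw [← hA, ← hB] at h
    omega
  zify [hBA, show (4:ℕ) ≤ 6*(m+3) from by omega]
  zify [show (1:ℕ) ≤ 2*(m+3) from by omega] at htot
  zify [show (1:ℕ) ≤ (m+3)*(m+3)+(m+3) from by nlinarith] at hge
  nlinarith [htot, hge]

end Seq


section Upper

variable (m : ℕ)

/-- position of vertex `v` in the optimal sequence -/
def yv (v : Fin (m+3)) : ℕ := if (v : ℕ) = 0 then 0 else 2*(v : ℕ) - 1

/-- position of edge `{i, i+1}` in the optimal sequence -/
def ye (i : Fin (m+3)) : ℕ := if (i : ℕ) = m+2 then 2*(m+3)-1 else 2*(i : ℕ) + 2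

lemma val_succ (i : Fin (m+3)) :
    ((i+1 : Fin (m+3)) : ℕ) = if (i : ℕ) = m+2 then 0 else (i : ℕ)+1 := by
  have h : ((i+1 : Fin (m+3)) : ℕ) = ((i : ℕ) + 1) % (m+3) := by
    rw [Fin.add_def]
    rfl
  have hlt := i.isLt
  split
  · next hc => rw [h, hc]; simp
  · next hc => rw [h]; exact Nat.mod_eq_of_lt (by omega)

noncomputable def yFun :
    (Fin (m+3)) ⊕ (cycleGraph (m+3)).edgeSet → Fin (numElts (cycleGraph (m+3)))
  | Sum.inl v => ⟨yv m v, by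
      rw [numElts_eq]
      have := v.isLt
      simp only [yv]
      split <;> omega⟩
  | Sum.inr e => ⟨ye m ((eEquiv m).symm e), by
      rw [numElts_eq]
      have := ((eEquiv m).symm e).isLt
      simp only [ye]
      split <;> omega⟩

lemma yFun_inj : Function.Injective (yFun m) := by
  intro z w h
  have hval : ((yFun m z) : ℕ) = ((yFun m w) : ℕ) := congrArg Fin.val h
  match z, w with
  | Sum.inl v, Sum.inl u =>
      have hv := v.isLt
      have hu := u.isLt
      simp only [yFun, yv] at hval
      congr 1
      apply Fin.ext
      split at hval <;> split at hval <;> omega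
  | Sum.inl v, Sum.inr e =>
      exfalso
      have hv := v.isLt
      have hi := ((eEquiv m).symm e).isLt
      simp only [yFun, yv, ye] at hval
      split at hval <;> split at hval <;> omega
  | Sum.inr e, Sum.inl v =>
      exfalso
      have hv := v.isLt
      have hi := ((eEquiv m).symm e).isLt
      simp only [yFun, yv, ye] at hval
      split at hval <;> split at hval <;> omega
  | Sum.inr e, Sum.inr f =>
      have he := ((eEquiv m).symm e).isLt
      have hf := ((eEquiv m).symm f).isLt
      simp only [yFun, ye] at hval
      have : (eEquiv m).symm e = (eEquiv m).symm f := by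
        apply Fin.ext
        split at hval <;> split at hval <;> omega
      congr 1
      exact (eEquiv m).symm.injective this

lemma yFun_bij : Function.Bijective (yFun m) := by
  rw [Fintype.bijective_iff_injective_and_card]
  refine ⟨yFun_inj m, ?_⟩
  rw [Fintype.card_sum, Fintype.card_fin, Fintype.card_fin, numElts_eq,
    ← Nat.card_eq_fintype_card, card_edgeSet_s15]
  ring

noncomputable def xSeq : Fin (numElts (cycleGraph (m+3)))
    ≃ (Fin (m+3)) ⊕ (cycleGraph (m+3)).edgeSet :=
  (Equiv.ofBijective (yFun m) (yFun_bij m)).symm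

lemma xSeq_symm_apply (z : (Fin (m+3)) ⊕ (cycleGraph (m+3)).edgeSet) :
    (xSeq m).symm z = yFun m z := rfl

lemma pe_xSeq (i : Fin (m+3)) : pe (xSeq m) i = ye m i := by
  show ((yFun m (Sum.inr (eFun m i))) : ℕ) = ye m i
  simp only [yFun]
  congr 1
  exact (eEquiv m).symm_apply_apply i

lemma pv_xSeq (v : Fin (m+3)) : pv (xSeq m) v = yv m v := rfl

lemma xSeq_isCSeq : IsCSeq (cycleGraph (m+3)) (xSeq m) := by
  intro e v hv
  obtain ⟨i, rfl⟩ := (eFun_bij m).surjective e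
  have hv' : v = i ∨ v = i + 1 := by
    have : v ∈ s(i, i+1) := hv
    rwa [Sym2.mem_iff] at this
  rw [Fin.lt_def]
  show (((xSeq m).symm (Sum.inl v)) : ℕ) < pe (xSeq m) i
  rw [pe_xSeq]
  have hi := i.isLt
  rcases hv' with rfl | rfl
  · show yv m v < ye m v
    have := v.isLt
    simp only [yv, ye]
    split <;> split <;> omega
  · show yv m (i+1) < ye m i
    simp only [yv, ye, val_succ]
    split <;> split <;> omega

lemma cost_xSeq : cost (cycleGraph (m+3)) (xSeq m) = 6*(m+3) - 4 := by
  rw [cost_eq]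
  have hterm : ∀ i : Fin (m+3),
      2 * pe (xSeq m) i - (pv (xSeq m) i + pv (xSeq m) (i+1))
      = if (i : ℕ) = 0 then 3 else if (i : ℕ) = m+2 then 2*m+7 else 4 := by
    intro i
    rw [pe_xSeq, pv_xSeq, pv_xSeq]
    have hi := i.isLt
    simp only [yv, ye, val_succ]
    split_ifs <;> first
      | omega
      | exact absurd rfl (by omega)
      | exact (‹False›).elim
  rw [Finset.sum_congr rfl (fun i _ => hterm i)]
  rw [Fin.sum_univ_eq_sum_range (fun j => if j = 0 then 3 else if j = m+2 then 2*m+7 else 4)]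
  rw [show m+3 = (m+2)+1 by ring, Finset.sum_range_succ,
    show m+2 = (m+1)+1 by ring, Finset.sum_range_succ']
  have hmid : ∑ j ∈ Finset.range (m+1),
      (if j+1 = 0 then 3 else if j+1 = m+1+1 then 2*m+7 else 4) = 4*(m+1) := by
    have hc : ∀ j ∈ Finset.range (m+1),
        (if j+1 = 0 then 3 else if j+1 = m+1+1 then 2*m+7 else 4) = 4 := by
      intro j hj
      rw [Finset.mem_range] at hj
      rw [if_neg (by omega), if_neg (by omega)]
    rw [Finset.sum_congr rfl hc, Finset.sum_const, Finset.card_range, smul_eq_mul]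
    ring
  rw [hmid]
  norm_num
  omega

end Upper

/-- `ν_*(C_n) = 6n − 4` for `n ≥ 3`, where `C_n` is the cycle with `n` vertices. -/
theorem minCost_cycle (n : ℕ) (hn : 3 ≤ n) :
    minCost (SimpleGraph.cycleGraph n) = 6 * n - 4 := by
  obtain ⟨m, rfl⟩ : ∃ m, n = m + 3 := ⟨n - 3, by omega⟩
  apply le_antisymm
  · rw [minCost]
    exact Nat.sInf_le ⟨xSeq m, xSeq_isCSeq m, by rw [cost_xSeq]⟩
  · have hne : {c | ∃ x, IsCSeq (cycleGraph (m+3)) x ∧ cost (cycleGraph (m+3)) x = c}.Nonempty :=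
      ⟨_, xSeq m, xSeq_isCSeq m, rfl⟩
    obtain ⟨x, hx, hc⟩ := Nat.sInf_mem hne
    rw [minCost, ← hc]
    have := cost_ge x hx
    omega

end ConsCost
end
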